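/- Let (S, A) be an average scheme on a norming dual pair (X,Y). Then (S,A) is weakly ergodic (i.e. σ-lim_α A_α x exists for every x ∈ X and σ'-lim_α A'_α y exists for every y ∈ Y) if and only if for every x ∈ X the net (A_α x) clusters in (X,σ) and for every y ∈ Y the net (A'_α y) clusters in (Y,σ'). -/

import Mathlib

open Filter Topology Set

noncomputable section

/-- A norming dual pair `(X, Y, ⟨·,·⟩)`: Banach spaces `X`, `Y` with a bilinear duality
such that each norm is recovered as a supremum of pairings against the unit ball. -/
structure NormingDualPair (X Y : Type*) [NormedAddCommGroup X] [NormedSpace ℝ X]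
    [NormedAddCommGroup Y] [NormedSpace ℝ Y] : Type _ where
  p : X →ₗ[ℝ] Y →ₗ[ℝ] ℝ
  norm_eq_left : ∀ x : X, ‖x‖ = ⨆ y : {y : Y // ‖y‖ ≤ 1}, |p x y.1|
  norm_eq_right : ∀ y : Y, ‖y‖ = ⨆ x : {x : X // ‖x‖ ≤ 1}, |p x.1 y|

variable {X Y : Type*} [NormedAddCommGroup X] [NormedSpace ℝ X]
  [NormedAddCommGroup Y] [NormedSpace ℝ Y]

/-- The weak topology `σ(X,Y)` on `X` induced by the pairing. -/
def NormingDualPair.sigma (ndp : NormingDualPair X Y) : TopologicalSpace X :=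
  TopologicalSpace.induced (fun x => fun y : Y => ndp.p x y) Pi.topologicalSpace

/-- The weak topology `σ(Y,X)` on `Y` induced by the pairing. -/
def NormingDualPair.sigma' (ndp : NormingDualPair X Y) : TopologicalSpace Y :=
  TopologicalSpace.induced (fun y => fun x : X => ndp.p x y) Pi.topologicalSpace

/-- The fixed space `fix(𝒮) = ⋂_{S ∈ 𝒮} ker (I - S)`. -/
def fixedSpace (S : Set (X →L[ℝ] X)) : Set X := {x | ∀ s ∈ S, s x = x}

/-- The range `rg(I - 𝒮) = {x - Sx : x ∈ X, S ∈ 𝒮}`. -/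
def rangeIminus (S : Set (X →L[ℝ] X)) : Set X := {z | ∃ x : X, ∃ s ∈ S, z = x - s x}

/-- An average scheme `(𝒮, (A_α)_{α ∈ ι})` on a norming dual pair `(X,Y)`:
a semigroup `𝒮 ⊆ L(X,σ)` (σ-continuity encoded via the existence of adjoints on `Y`)
and a net of σ-continuous operators satisfying (AS1)-(AS3). -/
structure AverageScheme (ndp : NormingDualPair X Y) (ι : Type*) [Preorder ι] : Type _ where
  S : Set (X →L[ℝ] X)
  adj : (X →L[ℝ] X) → (Y →L[ℝ] Y)
  one_mem : (1 : X →L[ℝ] X) ∈ S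
  comp_mem : ∀ s ∈ S, ∀ t ∈ S, s.comp t ∈ S
  adj_spec : ∀ s ∈ S, ∀ (x : X) (y : Y), ndp.p (s x) y = ndp.p x (adj s y)
  A : ι → (X →L[ℝ] X)
  A' : ι → (Y →L[ℝ] Y)
  A'_spec : ∀ (α : ι) (x : X) (y : Y), ndp.p (A α x) y = ndp.p x (A' α y)
  normBound : ∃ M : ℝ, ∀ α : ι, ‖A α‖ ≤ M
  as2 : ∀ (α : ι) (x : X),
    A α x ∈ @closure X ndp.sigma (convexHull ℝ {z | ∃ s ∈ S, z = s x})
  as2' : ∀ (α : ι) (y : Y),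
    A' α y ∈ @closure Y ndp.sigma' (convexHull ℝ {z | ∃ s ∈ S, z = adj s y})
  as3_left : ∀ s ∈ S, ∀ x : X, Tendsto (fun α : ι => A α (s x - x)) atTop (nhds 0)
  as3_right : ∀ s ∈ S, ∀ x : X, Tendsto (fun α : ι => s (A α x) - A α x) atTop (nhds 0)
  as3'_left : ∀ s ∈ S, ∀ y : Y, Tendsto (fun α : ι => A' α (adj s y - y)) atTop (nhds 0)
  as3'_right : ∀ s ∈ S, ∀ y : Y, Tendsto (fun α : ι => adj s (A' α y) - A' α y) atTop (nhds 0)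

/-- The fixed space of the adjoint semigroup `fix(𝒮')` in `Y`. -/
def AverageScheme.fix' {ι : Type*} [Preorder ι] {ndp : NormingDualPair X Y}
    (AS : AverageScheme ndp ι) : Set Y := {y | ∀ s ∈ AS.S, AS.adj s y = y}

/-- The range `rg(I - 𝒮')` in `Y`. -/
def AverageScheme.rg' {ι : Type*} [Preorder ι] {ndp : NormingDualPair X Y}
    (AS : AverageScheme ndp ι) : Set Y := {z | ∃ y : Y, ∃ s ∈ AS.S, z = y - AS.adj s y}

/-- A filter (net) clusters in a topology: every finer nontrivial filter (subnet) has a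
cluster point (i.e. a convergent subnet). -/
def ClustersIn {Z : Type*} (τ : TopologicalSpace Z) (F : Filter Z) : Prop :=
  ∀ G : Filter Z, G ≤ F → G.NeBot → ∃ z : Z, @ClusterPt Z τ z G

/-- Weak ergodicity: `σ`-convergence of `A_α x` for every `x` and `σ'`-convergence of
`A'_α y` for every `y`. -/
def AverageScheme.WeaklyErgodic {ι : Type*} [Preorder ι] {ndp : NormingDualPair X Y}
    (AS : AverageScheme ndp ι) : Prop :=
  (∀ x : X, ∃ l : X, Tendsto (fun α : ι => AS.A α x) atTop (@nhds X ndp.sigma l)) ∧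
  (∀ y : Y, ∃ l : Y, Tendsto (fun α : ι => AS.A' α y) atTop (@nhds Y ndp.sigma' l))

/-- The fixed space as a submodule. -/
def fixedSubmodule (S : Set (X →L[ℝ] X)) : Submodule ℝ X where
  carrier := {x | ∀ s ∈ S, s x = x}
  add_mem' := by
    intro a b ha hb s hs
    simp only [Set.mem_setOf_eq] at *
    rw [map_add, ha s hs, hb s hs]
  zero_mem' := by
    intro s hs
    simp
  smul_mem' := by
    intro c x hx s hs
    simp only [Set.mem_setOf_eq] at *
    rw [map_smul, hx s hs]

/-! ### Auxiliary machinery -/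

/-- The weak topology induced by an abstract pairing. -/
def sigOf (p : X →ₗ[ℝ] Y →ₗ[ℝ] ℝ) : TopologicalSpace X :=
  TopologicalSpace.induced (fun x => fun y : Y => p x y) Pi.topologicalSpace

lemma sigOf_cont (p : X →ₗ[ℝ] Y →ₗ[ℝ] ℝ) (y : Y) :
    @Continuous X ℝ (sigOf p) _ (fun x => p x y) :=
  @Continuous.comp X (Y → ℝ) ℝ (sigOf p) _ _ (fun x => fun y : Y => p x y) (fun f => f y)
    (continuous_apply y) continuous_induced_dom

lemma clusterPt_pairing (p : X →ₗ[ℝ] Y →ₗ[ℝ] ℝ) {z : X} {G : Filter X}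
    (h : @ClusterPt X (sigOf p) z G) (y : Y) :
    ClusterPt (p z y) (Filter.map (fun x => p x y) G) :=
  @ClusterPt.map X ℝ (sigOf p) _ (fun x => p x y) z G (Filter.map (fun x => p x y) G) h
    (@Continuous.continuousAt X ℝ (sigOf p) _ _ _ (sigOf_cont p y)) Filter.tendsto_map

lemma clusterPt_eq_of_le_nhds {r c : ℝ} {H : Filter ℝ} (h : ClusterPt r H)
    (hH : H ≤ nhds c) : r = c :=
  eq_of_nhds_neBot (h.mono hH).neBot

lemma ndp_bound (ndp : NormingDualPair X Y) (x : X) (y : Y) : |ndp.p x y| ≤ ‖x‖ * ‖y‖ := by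
  by_cases hb : BddAbove (Set.range fun y : {y : Y // ‖y‖ ≤ 1} => |ndp.p x y.1|)
  · rcases eq_or_ne y 0 with rfl | hy
    · simp
    · have hy' : (0 : ℝ) < ‖y‖ := norm_pos_iff.mpr hy
      have h1 : ‖(‖y‖⁻¹ • y)‖ ≤ 1 := by
        rw [norm_smul, norm_inv, norm_norm, inv_mul_cancel₀ hy'.ne']
      have h2 := le_ciSup hb ⟨‖y‖⁻¹ • y, h1⟩
      rw [← ndp.norm_eq_left x] at h2
      have h3 : ndp.p x (‖y‖⁻¹ • y) = ‖y‖⁻¹ * ndp.p x y := by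
        rw [map_smul]; rfl
      rw [h3, abs_mul, abs_inv, abs_norm, inv_mul_le_iff₀ hy'] at h2
      calc |ndp.p x y| ≤ ‖y‖ * ‖x‖ := h2
        _ = ‖x‖ * ‖y‖ := mul_comm _ _
  · have hx : ‖x‖ = 0 := by
      rw [ndp.norm_eq_left x, Real.iSup_of_not_bddAbove hb]
    have : x = 0 := norm_eq_zero.mp hx
    subst this
    simp

lemma ndp_sep_left (ndp : NormingDualPair X Y) (x : X) (h : ∀ y, ndp.p x y = 0) : x = 0 := by
  haveI : Nonempty {y : Y // ‖y‖ ≤ 1} := ⟨⟨0, by simp⟩⟩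
  have : ‖x‖ = 0 := by
    rw [ndp.norm_eq_left x]
    simp [h]
  exact norm_eq_zero.mp this

lemma ndp_sep_right (ndp : NormingDualPair X Y) (y : Y) (h : ∀ x, ndp.p x y = 0) : y = 0 := by
  haveI : Nonempty {x : X // ‖x‖ ≤ 1} := ⟨⟨0, by simp⟩⟩
  have : ‖y‖ = 0 := by
    rw [ndp.norm_eq_right y]
    simp [h]
  exact norm_eq_zero.mp this

/-- Cluster points of (subfilters of) the averaging net are fixed by the semigroup. -/
lemma cluster_fixed {ι : Type*} [Preorder ι]
    (p : X →ₗ[ℝ] Y →ₗ[ℝ] ℝ)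
    (bound : ∀ x y, |p x y| ≤ ‖x‖ * ‖y‖)
    (sepX : ∀ x : X, (∀ y, p x y = 0) → x = 0)
    {S : Set (X →L[ℝ] X)}
    (hSS' : ∀ s ∈ S, ∀ y : Y, ∃ w : Y, ∀ z : X, p (s z) y = p z w)
    {f : ι → X}
    (hf : ∀ s ∈ S, Tendsto (fun α => s (f α) - f α) atTop (nhds (0 : X)))
    {G : Filter X} (hG : G ≤ Filter.map f atTop)
    {x₀ : X} (hx₀ : @ClusterPt X (sigOf p) x₀ G) :
    ∀ s ∈ S, s x₀ = x₀ := by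
  intro s hs
  have key : ∀ y : Y, p (s x₀ - x₀) y = 0 := by
    intro y
    obtain ⟨w, hw⟩ := hSS' s hs y
    set φ : X → ℝ := fun z => p z w - p z y with hφ
    have hcont : @Continuous X ℝ (sigOf p) _ φ :=
      @Continuous.sub ℝ X (sigOf p) _ _ _ _ _ (sigOf_cont p w) (sigOf_cont p y)
    have h1 : ClusterPt (φ x₀) (Filter.map φ G) :=
      @ClusterPt.map X ℝ (sigOf p) _ φ x₀ G (Filter.map φ G) hx₀
        (@Continuous.continuousAt X ℝ (sigOf p) _ _ _ hcont) Filter.tendsto_map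
    have h3 : Tendsto (fun α => φ (f α)) atTop (nhds (0 : ℝ)) := by
      have hb2 : ∀ α, ‖φ (f α)‖ ≤ ‖s (f α) - f α‖ * ‖y‖ := by
        intro α
        have h4 : φ (f α) = p (s (f α) - f α) y := by
          have h5 := hw (f α)
          simp [hφ, map_sub, h5]
        rw [h4]
        simpa using bound (s (f α) - f α) y
      exact squeeze_zero_norm hb2 (by simpa using (hf s hs).norm.mul_const ‖y‖)
    have h2 : Filter.map φ G ≤ nhds (0 : ℝ) :=
      calc Filter.map φ G ≤ Filter.map φ (Filter.map f atTop) := Filter.map_mono hG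
        _ = Filter.map (fun α => φ (f α)) atTop := Filter.map_map
        _ ≤ nhds 0 := h3
    have h6 : φ x₀ = 0 := clusterPt_eq_of_le_nhds h1 h2
    have h7 := hw x₀
    have h8 : p (s x₀) y - p x₀ y = 0 := by
      rw [h7]
      simpa [hφ] using h6
    simpa [map_sub] using h8
  exact sub_eq_zero.mp (sepX _ key)

/-- A point in the σ-closed convex hull of the orbit of a fixed point equals the fixed point. -/
lemma fixed_closure_eq
    (p : X →ₗ[ℝ] Y →ₗ[ℝ] ℝ)
    (sepX : ∀ x : X, (∀ y, p x y = 0) → x = 0)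
    {S : Set (X →L[ℝ] X)} {x₀ z : X}
    (hx₀ : ∀ s ∈ S, s x₀ = x₀)
    (hz : z ∈ @closure X (sigOf p) (convexHull ℝ {w | ∃ s ∈ S, w = s x₀})) :
    z = x₀ := by
  have hsub : {w : X | ∃ s ∈ S, w = s x₀} ⊆ {x₀} := by
    rintro w ⟨s, hs, rfl⟩
    simp [hx₀ s hs]
  have h1 : z ∈ @closure X (sigOf p) {x₀} :=
    @closure_mono X (sigOf p) _ _
      ((convexHull_mono hsub).trans (convexHull_singleton x₀).subset) _ hz
  have h2 : ∀ y, p z y = p x₀ y := by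
    intro y
    have h3 := @image_closure_subset_closure_image X ℝ (sigOf p) _ (fun x => p x y) {x₀}
      (sigOf_cont p y) _ (Set.mem_image_of_mem (fun x => p x y) h1)
    simpa using h3
  have h4 : z - x₀ = 0 := sepX _ (fun y => by simp [map_sub, h2 y])
  exact sub_eq_zero.mp h4

/-- Main one-sided convergence lemma: if all the (symmetric) data clusters, the
`X`-side net converges in the weak topology. -/
lemma main_conv {ι : Type*} [Preorder ι] [Nonempty ι] [IsDirected ι (· ≤ ·)]
    (p : X →ₗ[ℝ] Y →ₗ[ℝ] ℝ)
    (bound : ∀ x y, |p x y| ≤ ‖x‖ * ‖y‖)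
    (sepX : ∀ x : X, (∀ y, p x y = 0) → x = 0)
    (sepY : ∀ y : Y, (∀ x, p x y = 0) → y = 0)
    {S : Set (X →L[ℝ] X)} {S' : Set (Y →L[ℝ] Y)}
    (hSS' : ∀ s ∈ S, ∃ s' ∈ S', ∀ x y, p (s x) y = p x (s' y))
    (hS'S : ∀ s' ∈ S', ∃ s ∈ S, ∀ x y, p (s x) y = p x (s' y))
    {A : ι → X →L[ℝ] X} {A' : ι → Y →L[ℝ] Y}
    (hAA' : ∀ (α : ι) (x : X) (y : Y), p (A α x) y = p x (A' α y))
    (as2 : ∀ α x, A α x ∈ @closure X (sigOf p) (convexHull ℝ {z | ∃ s ∈ S, z = s x}))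
    (as2' : ∀ α y, A' α y ∈ @closure Y (sigOf p.flip) (convexHull ℝ {z | ∃ s' ∈ S', z = s' y}))
    (as3r : ∀ s ∈ S, ∀ x, Tendsto (fun α => s (A α x) - A α x) atTop (nhds (0 : X)))
    (as3r' : ∀ s' ∈ S', ∀ y, Tendsto (fun α => s' (A' α y) - A' α y) atTop (nhds (0 : Y)))
    (hX : ∀ x, ClustersIn (sigOf p) (Filter.map (fun α => A α x) atTop))
    (hY : ∀ y, ClustersIn (sigOf p.flip) (Filter.map (fun α => A' α y) atTop)) :
    ∀ x, ∃ l, Tendsto (fun α => A α x) atTop (@nhds X (sigOf p) l) := by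
  have hSS'w : ∀ s ∈ S, ∀ y : Y, ∃ w : Y, ∀ z : X, p (s z) y = p z w := by
    intro s hs y
    obtain ⟨s', _, hsp⟩ := hSS' s hs
    exact ⟨s' y, fun z => hsp z y⟩
  have hS'Sw : ∀ s' ∈ S', ∀ x : X, ∃ w : X, ∀ z : Y, p.flip (s' z) x = p.flip z w := by
    intro s' hs' x
    obtain ⟨s, _, hsp⟩ := hS'S s' hs'
    exact ⟨s x, fun z => (hsp x z).symm⟩
  have boundflip : ∀ (y : Y) (x : X), |p.flip y x| ≤ ‖y‖ * ‖x‖ := by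
    intro y x
    simpa [mul_comm] using bound x y
  intro x
  have hne : (Filter.map (fun α => A α x) atTop).NeBot := Filter.map_neBot
  obtain ⟨x₀, hx₀⟩ := hX x (Filter.map (fun α => A α x) atTop) le_rfl hne
  have hfix₀ : ∀ s ∈ S, s x₀ = x₀ :=
    cluster_fixed p bound sepX hSS'w (fun s hs => as3r s hs x) le_rfl hx₀
  -- uniqueness of fixed cluster points of subfilters
  have key : ∀ x₁ : X, (∀ s ∈ S, s x₁ = x₁) →
      (∃ G : Filter X, G ≤ Filter.map (fun α => A α x) atTop ∧
        @ClusterPt X (sigOf p) x₁ G) → x₁ = x₀ := by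
    rintro x₁ hfix₁ ⟨G, hG, hcl⟩
    have hval : ∀ (x₂ : X) (G₂ : Filter X),
        G₂ ≤ Filter.map (fun α => A α x) atTop → @ClusterPt X (sigOf p) x₂ G₂ →
        (∀ s ∈ S, s x₂ = x₂) → ∀ (y : Y) (y₀ : Y), (∀ α, A' α y₀ = y₀) →
        @ClusterPt Y (sigOf p.flip) y₀ (Filter.map (fun α => A' α y) atTop) →
        p x₂ y = p x y₀ := by
      intro x₂ G₂ hG₂ hcl₂ hfix₂ y y₀ hAy₀ hy₀
      have hAx₂ : ∀ α, A α x₂ = x₂ := fun α => fixed_closure_eq p sepX hfix₂ (as2 α x₂)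
      -- (i) p x₂ y₀ = p x₂ y
      have hi : p x₂ y₀ = p x₂ y := by
        have h1 := clusterPt_pairing p.flip hy₀ x₂
        refine clusterPt_eq_of_le_nhds h1 ?_
        rw [Filter.map_map]
        have heq : ((fun w => p.flip w x₂) ∘ fun α => A' α y) = fun _ => p x₂ y := by
          funext α
          show p x₂ (A' α y) = p x₂ y
          rw [← hAA' α x₂ y, hAx₂ α]
        rw [heq]
        exact tendsto_const_nhds
      -- (ii) p x₂ y₀ = p x y₀
      have hii : p x₂ y₀ = p x y₀ := by
        have h1 := clusterPt_pairing p hcl₂ y₀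
        refine clusterPt_eq_of_le_nhds h1 ?_
        refine le_trans (Filter.map_mono hG₂) ?_
        rw [Filter.map_map]
        have heq : ((fun z => p z y₀) ∘ fun α => A α x) = fun _ => p x y₀ := by
          funext α
          show p (A α x) y₀ = p x y₀
          rw [hAA' α x y₀, hAy₀ α]
        rw [heq]
        exact tendsto_const_nhds
      rw [← hi, hii]
    have heqy : ∀ y : Y, p x₁ y = p x₀ y := by
      intro y
      have hne' : (Filter.map (fun α => A' α y) atTop).NeBot := Filter.map_neBot
      obtain ⟨y₀, hy₀⟩ := hY y (Filter.map (fun α => A' α y) atTop) le_rfl hne'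
      have hfixy₀ : ∀ s' ∈ S', s' y₀ = y₀ :=
        cluster_fixed p.flip boundflip sepY hS'Sw (fun s' hs' => as3r' s' hs' y) le_rfl hy₀
      have hAy₀ : ∀ α, A' α y₀ = y₀ := fun α =>
        fixed_closure_eq p.flip sepY hfixy₀ (as2' α y₀)
      rw [hval x₁ G hG hcl hfix₁ y y₀ hAy₀ hy₀,
        ← hval x₀ (Filter.map (fun α => A α x) atTop) le_rfl hx₀ hfix₀ y y₀ hAy₀ hy₀]
    have h4 : x₁ - x₀ = 0 := sepX _ (fun y => by simp [map_sub, heqy y])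
    exact sub_eq_zero.mp h4
  refine ⟨x₀, ?_⟩
  rw [tendsto_iff_ultrafilter]
  intro U hU
  have hGle : Filter.map (fun α => A α x) (↑U) ≤ Filter.map (fun α => A α x) atTop :=
    Filter.map_mono hU
  obtain ⟨x₁, hx₁⟩ := hX x _ hGle Filter.map_neBot
  have hfix₁ : ∀ s ∈ S, s x₁ = x₁ :=
    cluster_fixed p bound sepX hSS'w (fun s hs => as3r s hs x) hGle hx₁
  have hx₁e : x₁ = x₀ := key x₁ hfix₁ ⟨_, hGle, hx₁⟩
  have hcoe : Filter.map (fun α => A α x) (↑U : Filter ι) =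
      ↑(U.map (fun α => A α x)) := rfl
  rw [hcoe] at hx₁
  have hconv := (@Ultrafilter.clusterPt_iff X x₁ (sigOf p) _).mp hx₁
  rw [← hx₁e]
  show Filter.map (fun α => A α x) (↑U : Filter ι) ≤ @nhds X (sigOf p) x₁
  rw [hcoe]
  exact hconv

theorem stmt8 {ι : Type*} [Preorder ι] [Nonempty ι] [IsDirected ι (· ≤ ·)]
    (ndp : NormingDualPair X Y) (AS : AverageScheme ndp ι) :
    AS.WeaklyErgodic ↔
      ((∀ x : X, ClustersIn ndp.sigma (Filter.map (fun α : ι => AS.A α x) atTop)) ∧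
       (∀ y : Y, ClustersIn ndp.sigma' (Filter.map (fun α : ι => AS.A' α y) atTop))) := by
  constructor
  · rintro ⟨hx, hy⟩
    constructor
    · intro x G hG hne
      obtain ⟨l, hl⟩ := hx x
      exact ⟨l, @ClusterPt.of_le_nhds X ndp.sigma l G (hG.trans hl) hne⟩
    · intro y G hG hne
      obtain ⟨l, hl⟩ := hy y
      exact ⟨l, @ClusterPt.of_le_nhds Y ndp.sigma' l G (hG.trans hl) hne⟩
  · rintro ⟨hXc, hYc⟩
    have bound := ndp_bound ndp
    have sepX := ndp_sep_left ndp
    have sepY := ndp_sep_right ndp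
    have hSS' : ∀ s ∈ AS.S, ∃ s' ∈ AS.adj '' AS.S, ∀ x y, ndp.p (s x) y = ndp.p x (s' y) :=
      fun s hs => ⟨AS.adj s, Set.mem_image_of_mem _ hs, fun x y => AS.adj_spec s hs x y⟩
    have hS'S : ∀ s' ∈ AS.adj '' AS.S, ∃ s ∈ AS.S, ∀ x y, ndp.p (s x) y = ndp.p x (s' y) := by
      rintro s' ⟨s, hs, rfl⟩
      exact ⟨s, hs, AS.adj_spec s hs⟩
    have as2' : ∀ α y, AS.A' α y ∈ @closure Y (sigOf ndp.p.flip)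
        (convexHull ℝ {z | ∃ s' ∈ AS.adj '' AS.S, z = s' y}) := by
      intro α y
      have hset : {z : Y | ∃ s' ∈ AS.adj '' AS.S, z = s' y} =
          {z : Y | ∃ s ∈ AS.S, z = AS.adj s y} := by
        ext z
        constructor
        · rintro ⟨s', ⟨s, hs, rfl⟩, rfl⟩
          exact ⟨s, hs, rfl⟩
        · rintro ⟨s, hs, rfl⟩
          exact ⟨AS.adj s, Set.mem_image_of_mem _ hs, rfl⟩
      rw [hset]
      exact AS.as2' α y
    have as3r' : ∀ s' ∈ AS.adj '' AS.S, ∀ y,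
        Tendsto (fun α => s' (AS.A' α y) - AS.A' α y) atTop (nhds (0 : Y)) := by
      rintro s' ⟨s, hs, rfl⟩ y
      exact AS.as3'_right s hs y
    constructor
    · exact main_conv ndp.p bound sepX sepY hSS' hS'S AS.A'_spec AS.as2 as2'
        AS.as3_right as3r' hXc hYc
    · have boundflip : ∀ (y : Y) (x : X), |ndp.p.flip y x| ≤ ‖y‖ * ‖x‖ := by
        intro y x
        simpa [mul_comm] using bound x y
      have hSS'flip : ∀ s' ∈ AS.adj '' AS.S, ∃ s ∈ AS.S, ∀ (y : Y) (x : X),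
          ndp.p.flip (s' y) x = ndp.p.flip y (s x) := by
        rintro s' ⟨s, hs, rfl⟩
        exact ⟨s, hs, fun y x => (AS.adj_spec s hs x y).symm⟩
      have hS'Sflip : ∀ s ∈ AS.S, ∃ s' ∈ AS.adj '' AS.S, ∀ (y : Y) (x : X),
          ndp.p.flip (s' y) x = ndp.p.flip y (s x) := by
        intro s hs
        exact ⟨AS.adj s, Set.mem_image_of_mem _ hs, fun y x => (AS.adj_spec s hs x y).symm⟩
      have hAA'flip : ∀ (α : ι) (y : Y) (x : X),
          ndp.p.flip (AS.A' α y) x = ndp.p.flip y (AS.A α x) :=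
        fun α y x => (AS.A'_spec α x y).symm
      exact main_conv ndp.p.flip boundflip sepY sepX hSS'flip hS'Sflip hAA'flip as2'
        AS.as2 as3r' AS.as3_right hYc hXc
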